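/- For any sequence u_1,...,u_T in R^d with average ū, the second order variability Ē = ∑_{t=1}^T ‖u_t − ū‖₂² satisfies Ē ≤ P·S̄, where P is the path length and S̄ the first order variability. -/
import Mathlib


open Finset

theorem stmt_6 (d T : ℕ) (hT : 1 ≤ T) (u : ℕ → EuclideanSpace ℝ (Fin d)) :
    ∑ t ∈ Finset.range T, ‖u t - (T : ℝ)⁻¹ • ∑ s ∈ Finset.range T, u s‖ ^ 2 ≤
      (∑ t ∈ Finset.range (T - 1), ‖u (t + 1) - u t‖) *
        ∑ t ∈ Finset.range T, ‖u t - (T : ℝ)⁻¹ • ∑ s ∈ Finset.range T, u s‖ := by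
  set P := ∑ t ∈ Finset.range (T - 1), ‖u (t + 1) - u t‖ with hPdef
  have hPnn : 0 ≤ P := Finset.sum_nonneg fun _ _ => norm_nonneg _
  have hT0 : (T : ℝ) ≠ 0 := by positivity
  -- pairwise bound
  have mono : ∀ a b, a ≤ b → b < T → ‖u b - u a‖ ≤ P := by
    intro a b hab hbT
    have h1 : dist (u a) (u b) ≤
        ∑ i ∈ range (b - a), dist (u (a + i)) (u (a + (i + 1))) := by
      have := dist_le_range_sum_dist (fun i => u (a + i)) (b - a)
      simpa [Nat.add_sub_cancel' hab] using this
    have h2 : ∑ i ∈ range (b - a), dist (u (a + i)) (u (a + (i + 1)))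
        = ∑ j ∈ Finset.Ico a b, dist (u j) (u (j + 1)) := by
      rw [Finset.sum_Ico_eq_sum_range]
      exact Finset.sum_congr rfl fun i _ => by ring_nf
    have h3 : ∑ j ∈ Finset.Ico a b, dist (u j) (u (j + 1)) ≤ P := by
      rw [hPdef]
      have hsub : Finset.Ico a b ⊆ Finset.range (T - 1) := by
        intro j hj
        simp only [Finset.mem_Ico] at hj
        simp only [Finset.mem_range]
        omega
      calc ∑ j ∈ Finset.Ico a b, dist (u j) (u (j + 1))
          = ∑ j ∈ Finset.Ico a b, ‖u (j + 1) - u j‖ := by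
            exact Finset.sum_congr rfl fun j _ => by
              rw [dist_eq_norm, norm_sub_rev]
        _ ≤ ∑ j ∈ Finset.range (T - 1), ‖u (j + 1) - u j‖ :=
            Finset.sum_le_sum_of_subset_of_nonneg hsub
              (fun _ _ _ => norm_nonneg _)
    calc ‖u b - u a‖ = dist (u a) (u b) := by rw [dist_eq_norm, norm_sub_rev]
      _ ≤ _ := h1
      _ = _ := h2
      _ ≤ P := h3
  have key : ∀ s t, s < T → t < T → ‖u t - u s‖ ≤ P := by
    intro s t hs ht
    rcases le_total s t with h | h
    · exact mono s t h ht
    · rw [norm_sub_rev]; exact mono t s h hs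
  -- each deviation bounded by P
  have hbound : ∀ t, t < T → ‖u t - (T : ℝ)⁻¹ • ∑ s ∈ Finset.range T, u s‖ ≤ P := by
    intro t ht
    have heq : u t - (T : ℝ)⁻¹ • ∑ s ∈ Finset.range T, u s
        = (T : ℝ)⁻¹ • ∑ s ∈ Finset.range T, (u t - u s) := by
      rw [Finset.sum_sub_distrib, smul_sub, Finset.sum_const, Finset.card_range,
        ← Nat.cast_smul_eq_nsmul ℝ, smul_smul, inv_mul_cancel₀ hT0, one_smul]
    rw [heq, norm_smul]
    have h1 : ‖∑ s ∈ Finset.range T, (u t - u s)‖ ≤ (T : ℝ) * P := by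
      calc ‖∑ s ∈ Finset.range T, (u t - u s)‖
          ≤ ∑ s ∈ Finset.range T, ‖u t - u s‖ := norm_sum_le _ _
        _ ≤ ∑ s ∈ Finset.range T, P :=
            Finset.sum_le_sum fun s hs => key s t (Finset.mem_range.mp hs) ht
        _ = (T : ℝ) * P := by rw [Finset.sum_const, Finset.card_range, nsmul_eq_mul]
    have h2 : ‖(T : ℝ)⁻¹‖ = (T : ℝ)⁻¹ := by
      rw [Real.norm_eq_abs, abs_of_nonneg (by positivity)]
    rw [h2]
    calc (T : ℝ)⁻¹ * ‖∑ s ∈ Finset.range T, (u t - u s)‖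
        ≤ (T : ℝ)⁻¹ * ((T : ℝ) * P) := by
          apply mul_le_mul_of_nonneg_left h1 (by positivity)
      _ = P := by field_simp
  rw [Finset.mul_sum]
  refine Finset.sum_le_sum fun t ht => ?_
  have h := hbound t (Finset.mem_range.mp ht)
  have hnn : 0 ≤ ‖u t - (T : ℝ)⁻¹ • ∑ s ∈ Finset.range T, u s‖ := norm_nonneg _
  calc ‖u t - (T : ℝ)⁻¹ • ∑ s ∈ Finset.range T, u s‖ ^ 2
      = ‖u t - (T : ℝ)⁻¹ • ∑ s ∈ Finset.range T, u s‖ *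
        ‖u t - (T : ℝ)⁻¹ • ∑ s ∈ Finset.range T, u s‖ := sq _
    _ ≤ P * ‖u t - (T : ℝ)⁻¹ • ∑ s ∈ Finset.range T, u s‖ :=
        mul_le_mul_of_nonneg_right h hnn
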